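/- arXiv:2109.01973 — 5 statements merged into one kernel-verified Lean document; each statement's English description precedes it below -/
import Mathlib

section
/- For every n ≥ δ + 2 and δ ≥ 1, the graph L_{n,δ} = K_1 ∨ (K_δ ∪ K_{n-δ-1}) has exactly (n-δ choose 2) + (δ+1 choose 2) edges and contains no Hamiltonian cycle. -/
open SimpleGraph

/-- `K_δ ∨ (K_{n-2δ+k} ∪ I_{δ-k})` on `Fin n`: vertices `< d` form the dominating
clique `K_d`, vertices in `[d, n-d+k)` form the clique, the rest are independent. -/
def Hgraph (n k d : ℕ) : SimpleGraph (Fin n) where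
  Adj u v := u ≠ v ∧ ((u : ℕ) < d ∨ (v : ℕ) < d ∨ ((u : ℕ) < n - d + k ∧ (v : ℕ) < n - d + k))
  symm := ⟨by intro u v h; exact ⟨h.1.symm, by tauto⟩⟩
  loopless := ⟨by intro u h; exact h.1 rfl⟩

/-- `K_{k+1} ∨ (K_{n-d-1} ∪ K_{d-k})` on `Fin n`: vertices `< k+1` form the dominating
clique, `[k+1, n-d+k)` forms `K_{n-d-1}`, `[n-d+k, n)` forms `K_{d-k}`. -/
def Lgraph (n k d : ℕ) : SimpleGraph (Fin n) where
  Adj u v := u ≠ v ∧ ((u : ℕ) < k + 1 ∨ (v : ℕ) < k + 1 ∨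
    ((u : ℕ) < n - d + k ∧ (v : ℕ) < n - d + k) ∨
    (n - d + k ≤ (u : ℕ) ∧ n - d + k ≤ (v : ℕ)))
  symm := ⟨by intro u v h; exact ⟨h.1.symm, by tauto⟩⟩
  loopless := ⟨by intro u h; exact h.1 rfl⟩

/-- `K_m ∪ I_{n-m}` on `Fin n`: vertices `< m` form a clique, the rest are isolated. -/
def KIgraph (n m : ℕ) : SimpleGraph (Fin n) where
  Adj u v := u ≠ v ∧ (u : ℕ) < m ∧ (v : ℕ) < m
  symm := ⟨by intro u v h; exact ⟨h.1.symm, h.2.2, h.2.1⟩⟩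
  loopless := ⟨by intro u h; exact h.1 rfl⟩

/-- Degree of a vertex, as the cardinality of its neighbour set. -/
noncomputable def deg {V : Type*} (G : SimpleGraph V) (v : V) : ℕ := (G.neighborSet v).ncard

/-- Number of edges of a graph. -/
noncomputable def eCount {V : Type*} (G : SimpleGraph V) : ℕ := G.edgeSet.ncard

open scoped Classical in
/-- Adjacency matrix over `ℝ`. -/
noncomputable def adjMat {V : Type*} [Fintype V] (G : SimpleGraph V) : Matrix V V ℝ :=
  fun u v => if G.Adj u v then 1 else 0

open scoped Classical in
/-- Signless Laplacian matrix `Q(G) = D(G) + A(G)` over `ℝ`. -/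
noncomputable def sLap {V : Type*} [Fintype V] (G : SimpleGraph V) : Matrix V V ℝ :=
  fun u v => (if u = v then (deg G u : ℝ) else 0) + (if G.Adj u v then 1 else 0)

/-- The largest (real) eigenvalue of a matrix. -/
noncomputable def maxEig {V : Type*} [Fintype V] (A : Matrix V V ℝ) : ℝ :=
  sSup {μ : ℝ | ∃ x : V → ℝ, x ≠ 0 ∧ A.mulVec x = μ • x}

/-- A graph is `k`-Hamiltonian if deleting any set of at most `k` vertices
leaves a Hamiltonian graph. -/
def IsKHamiltonian {n : ℕ} (G : SimpleGraph (Fin n)) (k : ℕ) : Prop :=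
  ∀ S : Finset (Fin n), S.card ≤ k →
    (G.induce ((↑(Sᶜ) : Set (Fin n)))).IsHamiltonian

/-- A graph is `k`-edge-Hamiltonian if every linear forest with at most `k` edges
(a set of edges forming vertex-disjoint paths) is contained in a Hamiltonian cycle. -/
def IsKEdgeHamiltonian {n : ℕ} (G : SimpleGraph (Fin n)) (k : ℕ) : Prop :=
  ∀ F : Set (Sym2 (Fin n)), F ⊆ G.edgeSet → F.ncard ≤ k →
    (SimpleGraph.fromEdgeSet F).IsAcyclic →
    (∀ v, ((SimpleGraph.fromEdgeSet F).neighborSet v).ncard ≤ 2) →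
    ∃ (a : Fin n) (p : G.Walk a a), p.IsHamiltonianCycle ∧ ∀ e ∈ F, e ∈ p.edges

/-- The `s`-closure of a graph: the smallest supergraph in which any two distinct
non-adjacent vertices have degree sum less than `s`. -/
noncomputable def closureGraph {V : Type*} (G : SimpleGraph V) (s : ℕ) : SimpleGraph V :=
  sInf {H | G ≤ H ∧ ∀ u v, u ≠ v → s ≤ deg H u + deg H v → H.Adj u v}

instance (n k d : ℕ) : DecidableRel (Lgraph n k d).Adj := fun u v =>
  decidable_of_iff (u ≠ v ∧ ((u : ℕ) < k + 1 ∨ (v : ℕ) < k + 1 ∨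
    ((u : ℕ) < n - d + k ∧ (v : ℕ) < n - d + k) ∨
    (n - d + k ≤ (u : ℕ) ∧ n - d + k ≤ (v : ℕ)))) Iff.rfl

lemma two_mul_choose_two (m : ℕ) : 2 * m.choose 2 = m * (m - 1) := by
  induction m with
  | zero => rfl
  | succ k ih =>
    rw [Nat.choose_succ_succ, Nat.mul_add, ih, Nat.choose_one_right]
    cases k with
    | zero => rfl
    | succ j => simp [Nat.succ_sub_one]; ring

lemma eCount_eq_card {V : Type*} [Fintype V] [DecidableEq V] (G : SimpleGraph V)
    [DecidableRel G.Adj] : eCount G = G.edgeFinset.card := by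
  rw [eCount, SimpleGraph.edgeFinset, Set.ncard_eq_toFinset_card']

lemma chain_key {α : Type*} (R : α → α → Prop) (P Q : α → Prop)
    (hR : ∀ u v, R u v → Q u → Q v → (P u ↔ P v)) :
    ∀ (l : List α) (x : α), List.Chain R x l → Q x → (∀ z ∈ l, Q z) →
      ∀ a ∈ l, (P x ↔ P a) := by
  intro l
  induction l with
  | nil => intro x _ _ _ a ha; simp at ha
  | cons y t ih =>
    intro x hch hx hq a ha
    rcases List.chain_cons.mp hch with ⟨hxy, hyt⟩
    have hy : Q y := hq y (by simp)
    have hPxy := hR x y hxy hx hy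
    rcases List.mem_cons.mp ha with rfl | ha'
    · exact hPxy
    · exact hPxy.trans (ih y hyt hy (fun z hz => hq z (List.mem_cons_of_mem _ hz)) a ha')

lemma chain'_key {α : Type*} (R : α → α → Prop) (P Q : α → Prop)
    (hR : ∀ u v, R u v → Q u → Q v → (P u ↔ P v))
    (l : List α) (hch : List.Chain' R l) (hq : ∀ z ∈ l, Q z) :
    ∀ a ∈ l, ∀ b ∈ l, (P a ↔ P b) := by
  intro a ha b hb
  cases l with
  | nil => simp at ha
  | cons x t =>
    have hx : Q x := hq x (by simp)
    have hq' : ∀ z ∈ t, Q z := fun z hz => hq z (List.mem_cons_of_mem _ hz)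
    have hcht : List.Chain R x t := hch
    have h1 : P x ↔ P a := by
      rcases List.mem_cons.mp ha with rfl | h
      · exact Iff.rfl
      · exact chain_key R P Q hR t x hcht hx hq' a h
    have h2 : P x ↔ P b := by
      rcases List.mem_cons.mp hb with rfl | h
      · exact Iff.rfl
      · exact chain_key R P Q hR t x hcht hx hq' b h
    exact h1.symm.trans h2

lemma deg_L (n d : ℕ) (hd : 1 ≤ d) (hn : d + 2 ≤ n) (v : Fin n) :
    haveI : NeZero n := ⟨by omega⟩
    (Lgraph n 0 d).degree v =
      if (v : ℕ) = 0 then n - 1 else if (v : ℕ) < n - d then n - d - 1 else d := by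
  haveI : NeZero n := ⟨by omega⟩
  set m := n - d with hm
  have hm2 : 2 ≤ m := by omega
  have hmn : m < n := by omega
  set a : Fin n := ⟨m, hmn⟩ with ha
  have hadj : ∀ u w : Fin n, (Lgraph n 0 d).Adj u w ↔
      u ≠ w ∧ ((u : ℕ) < 1 ∨ (w : ℕ) < 1 ∨ ((u : ℕ) < m ∧ (w : ℕ) < m) ∨
        (m ≤ (u : ℕ) ∧ m ≤ (w : ℕ))) := by
    intro u w; simp [Lgraph, hm]
  rw [← SimpleGraph.card_neighborFinset_eq_degree]
  by_cases h0 : (v : ℕ) = 0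
  · have hv0 : v = 0 := by
      apply Fin.ext; simp [h0]
    rw [if_pos h0]
    have : (Lgraph n 0 d).neighborFinset v = Finset.univ.erase v := by
      ext u
      simp only [SimpleGraph.mem_neighborFinset, Finset.mem_erase, Finset.mem_univ, and_true]
      rw [hadj]
      constructor
      · rintro ⟨h1, _⟩; exact fun h => h1 h.symm
      · intro h; exact ⟨fun h' => h h'.symm, Or.inl (by omega)⟩
    rw [this, Finset.card_erase_of_mem (Finset.mem_univ v), Finset.card_univ, Fintype.card_fin]
  · rw [if_neg h0]
    by_cases hlt : (v : ℕ) < m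
    · rw [if_pos hlt]
      have : (Lgraph n 0 d).neighborFinset v = (Finset.Iio a).erase v := by
        ext u
        simp only [SimpleGraph.mem_neighborFinset, Finset.mem_erase, Finset.mem_Iio]
        rw [hadj]
        have : (u < a) ↔ (u : ℕ) < m := Iff.rfl
        rw [this]
        constructor
        · rintro ⟨h1, h2⟩
          refine ⟨fun h => h1 h.symm, ?_⟩
          omega
        · rintro ⟨h1, h2⟩
          exact ⟨fun h => h1 h.symm, Or.inr (Or.inr (Or.inl ⟨hlt, h2⟩))⟩
      rw [this, Finset.card_erase_of_mem (Finset.mem_Iio.mpr (show v < a from hlt)), Fin.card_Iio]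
    · rw [if_neg hlt]
      have hvm : m ≤ (v : ℕ) := by omega
      have h0notIci : (0 : Fin n) ∉ Finset.Ici a := by
        simp only [Finset.mem_Ici]
        intro h
        rw [Fin.le_def] at h
        have h2 : m ≤ 0 := by simpa [ha] using h
        omega
      have : (Lgraph n 0 d).neighborFinset v = (insert (0 : Fin n) (Finset.Ici a)).erase v := by
        ext u
        simp only [SimpleGraph.mem_neighborFinset, Finset.mem_erase, Finset.mem_insert,
          Finset.mem_Ici]
        rw [hadj]
        have hle : (a ≤ u) ↔ m ≤ (u : ℕ) := Iff.rfl
        rw [hle]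
        constructor
        · rintro ⟨h1, h2⟩
          refine ⟨fun h => h1 h.symm, ?_⟩
          rcases h2 with h | h | h | h
          · omega
          · left; exact Fin.ext (by rw [Fin.val_zero]; omega)
          · omega
          · right; exact h.2
        · rintro ⟨h1, h2⟩
          refine ⟨fun h => h1 h.symm, ?_⟩
          rcases h2 with rfl | h
          · right; left; simp
          · right; right; right; exact ⟨hvm, h⟩
      rw [this, Finset.card_erase_of_mem (by simp [Finset.mem_insert, Finset.mem_Ici]; right; exact hvm),
        Finset.card_insert_of_notMem h0notIci, Fin.card_Ici]
      simp [ha]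
      omega

/-- `L_{n,δ} = K_1 ∨ (K_δ ∪ K_{n-δ-1})` has exactly `C(n-δ,2) + C(δ+1,2)` edges
and no Hamiltonian cycle, for `n ≥ δ + 2`, `δ ≥ 1`. -/
theorem stmt_2 (n d : ℕ) (hd : 1 ≤ d) (hn : d + 2 ≤ n) :
    eCount (Lgraph n 0 d) = (n - d).choose 2 + (d + 1).choose 2 ∧
    ¬ (Lgraph n 0 d).IsHamiltonian := by
  haveI : NeZero n := ⟨by omega⟩
  constructor
  · -- edge count
    have hsum : ∑ v : Fin n, (Lgraph n 0 d).degree v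
        = (n - 1) + (n - d - 1) * (n - d - 1) + d * d := by
      have h1 : ∀ v : Fin n, (Lgraph n 0 d).degree v =
          (fun i : ℕ => if i = 0 then n - 1 else if i < n - d then n - d - 1 else d) (v : ℕ) :=
        fun v => deg_L n d hd hn v
      rw [Finset.sum_congr rfl (fun v _ => h1 v),
        Fin.sum_univ_eq_sum_range (fun i : ℕ => if i = 0 then n - 1 else if i < n - d then n - d - 1 else d) n]
      rw [Finset.range_eq_Ico, ← Finset.sum_Ico_consecutive _ (Nat.zero_le (n - d)) (by omega : n - d ≤ n)]
      have h2 : ∑ i ∈ Finset.Ico (n - d) n,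
          (if i = 0 then n - 1 else if i < n - d then n - d - 1 else d) = d * d := by
        rw [Finset.sum_congr rfl (fun i hi => ?_), Finset.sum_const, Nat.card_Ico]
        · rw [smul_eq_mul]; congr 1; omega
        · rw [Finset.mem_Ico] at hi
          rw [if_neg (by omega), if_neg (by omega)]
      have h3 : ∑ i ∈ Finset.Ico 0 (n - d),
          (if i = 0 then n - 1 else if i < n - d then n - d - 1 else d)
          = (n - 1) + (n - d - 1) * (n - d - 1) := by
        rw [← Finset.range_eq_Ico,
          ← Finset.add_sum_erase _ _ (Finset.mem_range.mpr (by omega : 0 < n - d))]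
        rw [if_pos rfl]
        congr 1
        rw [Finset.sum_congr rfl (fun i hi => ?_), Finset.sum_const,
          Finset.card_erase_of_mem (Finset.mem_range.mpr (by omega)), Finset.card_range,
          smul_eq_mul]
        rw [Finset.mem_erase, Finset.mem_range] at hi
        rw [if_neg hi.1, if_pos hi.2]
      rw [h2, h3]
    have htwice := (Lgraph n 0 d).sum_degrees_eq_twice_card_edges
    rw [hsum] at htwice
    have e2 : 2 * ((n - d).choose 2 + (d + 1).choose 2)
        = (n - d) * (n - d - 1) + (d + 1) * d := by
      rw [Nat.mul_add, two_mul_choose_two, two_mul_choose_two]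
      simp
    have e3 : (n - 1) + (n - d - 1) * (n - d - 1) + d * d
        = (n - d) * (n - d - 1) + (d + 1) * d := by
      obtain ⟨d', rfl⟩ : ∃ d', d = d' + 1 := ⟨d - 1, by omega⟩
      obtain ⟨m', hmeq⟩ : ∃ m', n = m' + 2 + (d' + 1) := ⟨n - d' - 3, by omega⟩
      subst hmeq
      have s1 : m' + 2 + (d' + 1) - 1 = m' + d' + 2 := by omega
      have s2 : m' + 2 + (d' + 1) - (d' + 1) = m' + 2 := by omega
      rw [s1, s2]
      have s3 : m' + 2 - 1 = m' + 1 := by omega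
      rw [s3]
      ring
    rw [eCount_eq_card]
    omega
  · -- not hamiltonian
    intro hham
    obtain ⟨a, p, hp⟩ := hham (by simp [Fintype.card_fin]; omega)
    have h0 : (0 : Fin n) ∈ p.support := hp.mem_support 0
    set q := p.rotate (0 : Fin n) h0 with hqdef
    have hcnt : ∀ v : Fin n, q.support.tail.count v = 1 := by
      intro v
      have hperm := (Walk.support_rotate p (0 : Fin n) h0).perm
      rw [hperm.count_eq]
      exact ((Walk.isHamiltonianCycle_iff_isCycle_and_support_count_tail_eq_one).mp hp).2 v
    set l := q.support.tail with hldef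
    have hmem : ∀ v : Fin n, v ∈ l := by
      intro v
      have h1 := hcnt v
      rw [← List.count_pos_iff]
      omega
    have hlne : l ≠ [] := fun h => by simpa [h] using hmem 0
    have hsupp : q.support = (0 : Fin n) :: l := q.support_eq_cons
    have hql : q.support.getLast? = some (0 : Fin n) := by
      rw [List.getLast?_eq_getLast (l := q.support) (by simp), q.getLast_support]
    have hll : l.getLast? = some (0 : Fin n) := by
      rw [hsupp] at hql
      cases hle : l with
      | nil => exact absurd hle hlne
      | cons y t =>
        rw [hle, List.getLast?_cons_cons] at hql
        exact hql
    have hlast : l.getLast hlne = 0 := by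
      rw [List.getLast?_eq_getLast hlne] at hll
      exact Option.some.inj hll
    have hsplit : l.dropLast ++ [(0 : Fin n)] = l := by
      conv_lhs => rw [← hlast]
      exact List.dropLast_append_getLast hlne
    have h0nd : (0 : Fin n) ∉ l.dropLast := by
      have h1 : (l.dropLast ++ [(0 : Fin n)]).count 0 = 1 := by rw [hsplit]; exact hcnt 0
      rw [List.count_append] at h1
      simp at h1
      exact List.count_eq_zero.mp h1
    have hch : List.Chain' (Lgraph n 0 d).Adj l := by
      have h1 := q.isChain_adj_support
      rw [hsupp] at h1
      exact h1.tail
    have hch' : List.Chain' (Lgraph n 0 d).Adj l.dropLast := by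
      have h1 : List.Chain' (Lgraph n 0 d).Adj (l.dropLast ++ [(0 : Fin n)]) := by
        rw [hsplit]; exact hch
      exact (List.isChain_append.mp h1).1
    have hR : ∀ u v : Fin n, (Lgraph n 0 d).Adj u v → u ≠ 0 → v ≠ 0 →
        ((n - d ≤ (u : ℕ)) ↔ (n - d ≤ (v : ℕ))) := by
      intro u v huv hu hv
      simp only [Lgraph] at huv
      have hu' : (u : ℕ) ≠ 0 := fun h => hu (Fin.ext (by simp [h]))
      have hv' : (v : ℕ) ≠ 0 := fun h => hv (Fin.ext (by simp [h]))
      obtain ⟨hne, hc⟩ := huv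
      omega
    have hmemd : ∀ w : Fin n, w ≠ 0 → w ∈ l.dropLast := by
      intro w hw
      have hw1 : w ∈ l.dropLast ++ [(0 : Fin n)] := by rw [hsplit]; exact hmem w
      rcases List.mem_append.mp hw1 with h | h
      · exact h
      · simp at h
        exact absurd h hw
    have ha1d : (⟨1, by omega⟩ : Fin n) ∈ l.dropLast := by
      apply hmemd
      intro h
      have := congrArg Fin.val h
      simp at this
    have hb1d : (⟨n - 1, by omega⟩ : Fin n) ∈ l.dropLast := by
      apply hmemd
      intro h
      have := congrArg Fin.val h
      simp at this
      omega
    have key := chain'_key (Lgraph n 0 d).Adj (fun v : Fin n => n - d ≤ (v : ℕ))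
      (fun v : Fin n => v ≠ 0) hR l.dropLast hch'
      (fun z hz hz0 => h0nd (hz0 ▸ hz)) _ ha1d _ hb1d
    simp only [] at key
    omega
end

section
/- For k ≥ 0, δ ≥ k+2, and n ≥ 2δ - k + 1, the graph H_{n,k,δ} = K_δ ∨ (K_{n-2δ+k} ∪ I_{δ-k}) has minimum degree exactly δ and is not k-Hamiltonian; in particular, deleting the k vertices of a suitable subset of the dominating clique K_δ leaves a graph with no Hamiltonian cycle. -/
open SimpleGraph

section AuxStmt3
open Finset

lemma auxCardFin (n a b : ℕ) (hb : b ≤ n) :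
    ((Finset.univ : Finset (Fin n)).filter fun v : Fin n => a ≤ (v : ℕ) ∧ (v : ℕ) < b).card
      = b - a := by
  rw [← Nat.card_Ico a b]
  refine Finset.card_bij' (i := fun (v : Fin n) (_ : v ∈ (Finset.univ : Finset (Fin n)).filter
      fun v : Fin n => a ≤ (v : ℕ) ∧ (v : ℕ) < b) => (v : ℕ))
    (j := fun i hi => (⟨i, lt_of_lt_of_le (Finset.mem_Ico.1 hi).2 hb⟩ : Fin n)) ?_ ?_ ?_ ?_
  · intro v hv
    simp only [Finset.mem_filter] at hv
    exact Finset.mem_Ico.2 ⟨hv.2.1, hv.2.2⟩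
  · intro i hi
    simp only [Finset.mem_filter, Finset.mem_univ, true_and]
    exact ⟨(Finset.mem_Ico.1 hi).1, (Finset.mem_Ico.1 hi).2⟩
  · intro v hv; simp
  · intro i hi; simp

lemma auxCardFinLt (n b : ℕ) (hb : b ≤ n) :
    ((Finset.univ : Finset (Fin n)).filter fun v : Fin n => (v : ℕ) < b).card = b := by
  have h : ((Finset.univ : Finset (Fin n)).filter fun v : Fin n => (v : ℕ) < b)
      = (Finset.univ : Finset (Fin n)).filter fun v : Fin n => 0 ≤ (v : ℕ) ∧ (v : ℕ) < b := by
    ext v; simp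
  rw [h, auxCardFin n 0 b hb]; omega

lemma auxCardSub {n : ℕ} (s : Finset (Fin n)) (P : Fin n → Prop) [DecidablePred P] :
    ((Finset.univ : Finset ↥((↑s : Set (Fin n)))).filter
        fun x : ↥((↑s : Set (Fin n))) => P ↑x).card
      = (s.filter P).card := by
  refine Finset.card_bij'
    (i := fun (x : ↥((↑s : Set (Fin n)))) (_ : x ∈ (Finset.univ.filter
        fun x : ↥((↑s : Set (Fin n))) => P ↑x)) => (↑x : Fin n))
    (j := fun v hv => (⟨v, Finset.mem_coe.2 (Finset.mem_of_mem_filter v hv)⟩ :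
        ↥((↑s : Set (Fin n))))) ?_ ?_ ?_ ?_
  · intro x hx
    simp only [Finset.mem_filter] at hx ⊢
    exact ⟨Finset.mem_coe.1 x.2, hx.2⟩
  · intro v hv
    simp only [Finset.mem_filter, Finset.mem_univ, true_and]
    exact (Finset.mem_filter.1 hv).2
  · intro x hx; simp
  · intro v hv; simp

lemma auxWalkClosed {V : Type*} {G : SimpleGraph V} (T : V → Prop) :
    ∀ {x y : V} (q : G.Walk x y),
      (∀ dr ∈ q.darts, T dr.toProd.1 → T dr.toProd.2) → T x → ∀ z ∈ q.support, T z := by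
  intro x y q
  induction q with
  | nil =>
    intro _ hx z hz
    rw [SimpleGraph.Walk.support_nil, List.mem_singleton] at hz
    exact hz ▸ hx
  | @cons u v w h q ih =>
    intro hdarts hx z hz
    rw [SimpleGraph.Walk.support_cons, List.mem_cons] at hz
    rcases hz with rfl | hz
    · exact hx
    · refine ih ?_ ?_ z hz
      · intro dr hdr
        exact hdarts dr (by rw [SimpleGraph.Walk.darts_cons]; exact List.mem_cons_of_mem _ hdr)
      · exact hdarts ⟨(u, v), h⟩
          (by rw [SimpleGraph.Walk.darts_cons]; exact List.mem_cons_self) hx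

lemma auxNotHam (n k d : ℕ) (hd : k + 2 ≤ d) (hn : 2 * d - k + 1 ≤ n) :
    ¬ ((Hgraph n k d).induce
        ((↑(((Finset.univ : Finset (Fin n)).filter fun v : Fin n => (v : ℕ) < k)ᶜ) :
          Set (Fin n)))).IsHamiltonian := by
  have hdn : d + 1 ≤ n - d + k := by omega
  have hmn : n - d + k < n := by omega
  set S : Finset (Fin n) := (Finset.univ : Finset (Fin n)).filter fun v : Fin n => (v : ℕ) < k
    with hSdef
  have hmem : ∀ v : Fin n, v ∈ (↑(Sᶜ) : Set (Fin n)) ↔ k ≤ (v : ℕ) := by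
    intro v
    simp [hSdef, Finset.mem_coe, Finset.mem_compl, Finset.mem_filter, not_lt]
  intro hHam
  set V' : Set (Fin n) := (↑(Sᶜ) : Set (Fin n)) with hV'def
  have hv0m : (⟨d, by omega⟩ : Fin n) ∈ V' := (hmem _).2 (show k ≤ d by omega)
  have hw0m : (⟨n - d + k, by omega⟩ : Fin n) ∈ V' := (hmem _).2 (show k ≤ n - d + k by omega)
  set v0 : ↥V' := ⟨⟨d, by omega⟩, hv0m⟩ with hv0def
  set w0 : ↥V' := ⟨⟨n - d + k, by omega⟩, hw0m⟩ with hw0def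
  have hne : v0 ≠ w0 := by
    intro h
    have : d = n - d + k := congrArg (fun x : ↥V' => ((x : Fin n) : ℕ)) h
    omega
  haveI : Nontrivial ↥V' := ⟨v0, w0, hne⟩
  obtain ⟨a, p, hp⟩ := hHam Fintype.one_lt_card.ne'
  -- basic facts about vertices
  have hkx : ∀ x : ↥V', k ≤ ((x : Fin n) : ℕ) := fun x => (hmem _).1 x.2
  have hxn : ∀ x : ↥V', ((x : Fin n) : ℕ) < n := fun x => (x : Fin n).isLt
  -- adjacency of darts
  have hadj : ∀ dr : ((Hgraph n k d).induce V').Dart,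
      (((dr.toProd.1 : Fin n) : ℕ) < d ∨ ((dr.toProd.2 : Fin n) : ℕ) < d ∨
        (((dr.toProd.1 : Fin n) : ℕ) < n - d + k ∧ ((dr.toProd.2 : Fin n) : ℕ) < n - d + k)) :=
    fun dr => dr.adj.2
  set D : Multiset (((Hgraph n k d).induce V').Dart) := ↑p.darts with hDdef
  -- counts of vertices as dart endpoints
  have hcnt2 : ∀ x : ↥V', Multiset.count x (D.map fun dr => dr.toProd.2) = 1 := by
    intro x
    have h1 : D.map (fun dr => dr.toProd.2) = (p.darts.map fun dr => dr.toProd.2 : List ↥V') := by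
      simp [hDdef]
      exact List.Perm.refl _
    rw [h1, Multiset.coe_count, SimpleGraph.Walk.map_snd_darts,
      ← SimpleGraph.Walk.support_tail_of_not_nil p hp.isCycle.not_nil]
    exact hp.isHamiltonian_tail x
  have hcnt1 : ∀ x : ↥V', Multiset.count x (D.map fun dr => dr.toProd.1) = 1 := by
    intro x
    have h1 : D.map (fun dr => dr.toProd.1) = (p.darts.map fun dr => dr.toProd.1 : List ↥V') := by
      simp [hDdef]
      exact List.Perm.refl _
    rw [h1, Multiset.coe_count]
    have h2 : ((p.darts.map fun dr => dr.toProd.1) ++ [a]).count x = (a :: p.support.tail).count x := by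
      rw [SimpleGraph.Walk.map_fst_darts_append, ← SimpleGraph.Walk.support_eq_cons]
    have h3 : p.support.tail.count x = 1 := by
      rw [← SimpleGraph.Walk.support_tail_of_not_nil p hp.isCycle.not_nil]
      convert hp.isHamiltonian_tail x using 2; exact lawful_beq_subsingleton _ _
    simp only [List.count_append, List.count_cons, List.count_nil, h3] at h2
    rcases eq_or_ne x a with rfl | hxa
    · simp only [beq_self_eq_true, if_true] at h2
      convert (by omega : List.count x (List.map (fun dr => dr.toProd.1) p.darts) = 1) using 2 <;>
        exact lawful_beq_subsingleton _ _
    · simp [Ne.symm hxa] at h2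
      convert (by omega : List.count x (List.map (fun dr => dr.toProd.1) p.darts) = 1) using 2 <;>
        exact lawful_beq_subsingleton _ _
  have huniv : ∀ x : ↥V', Multiset.count x (Finset.univ : Finset ↥V').val = 1 := fun x =>
    Multiset.count_eq_one_of_mem Finset.univ.nodup (Finset.mem_univ x)
  have hmseq : D.map (fun dr => dr.toProd.2) = (Finset.univ : Finset ↥V').val :=
    Multiset.ext.2 fun x => by rw [hcnt2, huniv]
  have hmfeq : D.map (fun dr => dr.toProd.1) = (Finset.univ : Finset ↥V').val :=
    Multiset.ext.2 fun x => by rw [hcnt1, huniv]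
  -- generic card computation for filters over darts
  have keyCard : ∀ (f : ((Hgraph n k d).induce V').Dart → ↥V')
      (Q : ↥V' → Prop) [DecidablePred Q], D.map f = (Finset.univ : Finset ↥V').val →
      Multiset.card (D.filter fun dr => Q (f dr)) = (Finset.univ.filter Q).card := by
    intro f Q hQ hfeq
    calc Multiset.card (D.filter fun dr => Q (f dr))
        = Multiset.countP Q (D.map f) := (Multiset.countP_map f D Q).symm
      _ = Multiset.countP Q (Finset.univ : Finset ↥V').val := by rw [hfeq]
      _ = Multiset.card (Multiset.filter Q (Finset.univ : Finset ↥V').val) :=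
          Multiset.countP_eq_card_filter Q _
      _ = ((Finset.univ : Finset ↥V').filter Q).card := rfl
  -- vertex class cardinalities
  have hVD : ((Finset.univ : Finset ↥V').filter fun x : ↥V' => ((x : Fin n) : ℕ) < d).card
      = d - k := by
    have h2 := auxCardSub (Sᶜ) (fun v : Fin n => (v : ℕ) < d)
    have h1 : (Sᶜ).filter (fun v : Fin n => (v : ℕ) < d)
        = (Finset.univ : Finset (Fin n)).filter fun v : Fin n => k ≤ (v : ℕ) ∧ (v : ℕ) < d := by
      ext v
      simp [hSdef, Finset.mem_compl, Finset.mem_filter, not_lt]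
    rw [h1, auxCardFin n k d (by omega)] at h2
    exact h2
  have hVI : ((Finset.univ : Finset ↥V').filter fun x : ↥V' => n - d + k ≤ ((x : Fin n) : ℕ)).card
      = d - k := by
    have h2 := auxCardSub (Sᶜ) (fun v : Fin n => n - d + k ≤ (v : ℕ))
    have h1 : (Sᶜ).filter (fun v : Fin n => n - d + k ≤ (v : ℕ))
        = (Finset.univ : Finset (Fin n)).filter
            fun v : Fin n => n - d + k ≤ (v : ℕ) ∧ (v : ℕ) < n := by
      ext v
      have := v.isLt
      simp only [hSdef, Finset.mem_filter, Finset.mem_compl, Finset.mem_univ, true_and, not_lt]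
      omega
    rw [h1, auxCardFin n (n - d + k) n le_rfl] at h2
    rw [h2]
    omega
  -- the four dart-filter cardinalities
  have hc1 : Multiset.card (D.filter fun dr => n - d + k ≤ ((dr.toProd.2 : Fin n) : ℕ)) = d - k := by
    rw [keyCard (fun dr => dr.toProd.2) (fun x => n - d + k ≤ ((x : Fin n) : ℕ))  hmseq, hVI]
  have hc2 : Multiset.card (D.filter fun dr => ((dr.toProd.1 : Fin n) : ℕ) < d) = d - k := by
    rw [keyCard (fun dr => dr.toProd.1) (fun x => ((x : Fin n) : ℕ) < d)  hmfeq, hVD]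
  have hc3 : Multiset.card (D.filter fun dr => n - d + k ≤ ((dr.toProd.1 : Fin n) : ℕ)) = d - k := by
    rw [keyCard (fun dr => dr.toProd.1) (fun x => n - d + k ≤ ((x : Fin n) : ℕ))  hmfeq, hVI]
  have hc4 : Multiset.card (D.filter fun dr => ((dr.toProd.2 : Fin n) : ℕ) < d) = d - k := by
    rw [keyCard (fun dr => dr.toProd.2) (fun x => ((x : Fin n) : ℕ) < d)  hmseq, hVD]
  -- subset relations
  have himp1 : ∀ dr : ((Hgraph n k d).induce V').Dart,
      n - d + k ≤ ((dr.toProd.2 : Fin n) : ℕ) → ((dr.toProd.1 : Fin n) : ℕ) < d := by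
    intro dr h
    have := hadj dr
    omega
  have himp2 : ∀ dr : ((Hgraph n k d).induce V').Dart,
      n - d + k ≤ ((dr.toProd.1 : Fin n) : ℕ) → ((dr.toProd.2 : Fin n) : ℕ) < d := by
    intro dr h
    have := hadj dr
    omega
  have heq1 : D.filter (fun dr => n - d + k ≤ ((dr.toProd.2 : Fin n) : ℕ))
      = D.filter (fun dr => ((dr.toProd.1 : Fin n) : ℕ) < d) :=
    Multiset.eq_of_le_of_card_le (Multiset.monotone_filter_right D himp1) (by rw [hc1, hc2])
  have heq2 : D.filter (fun dr => n - d + k ≤ ((dr.toProd.1 : Fin n) : ℕ))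
      = D.filter (fun dr => ((dr.toProd.2 : Fin n) : ℕ) < d) :=
    Multiset.eq_of_le_of_card_le (Multiset.monotone_filter_right D himp2) (by rw [hc3, hc4])
  have hB1 : ∀ dr ∈ p.darts, ((dr.toProd.1 : Fin n) : ℕ) < d →
      n - d + k ≤ ((dr.toProd.2 : Fin n) : ℕ) := by
    intro dr hdr hfst
    have hmem' : dr ∈ D.filter (fun dr => ((dr.toProd.1 : Fin n) : ℕ) < d) :=
      Multiset.mem_filter.2 ⟨Multiset.mem_coe.2 hdr, hfst⟩
    rw [← heq1] at hmem'
    exact (Multiset.mem_filter.1 hmem').2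
  have hB2 : ∀ dr ∈ p.darts, ((dr.toProd.2 : Fin n) : ℕ) < d →
      n - d + k ≤ ((dr.toProd.1 : Fin n) : ℕ) := by
    intro dr hdr hsnd
    have hmem' : dr ∈ D.filter (fun dr => ((dr.toProd.2 : Fin n) : ℕ) < d) :=
      Multiset.mem_filter.2 ⟨Multiset.mem_coe.2 hdr, hsnd⟩
    rw [← heq2] at hmem'
    exact (Multiset.mem_filter.1 hmem').2
  -- closure steps
  have hstepC : ∀ dr ∈ p.darts,
      (d ≤ ((dr.toProd.1 : Fin n) : ℕ) ∧ ((dr.toProd.1 : Fin n) : ℕ) < n - d + k) →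
      (d ≤ ((dr.toProd.2 : Fin n) : ℕ) ∧ ((dr.toProd.2 : Fin n) : ℕ) < n - d + k) := by
    intro dr hdr hC
    have h1 := hB2 dr hdr
    have h2 := hadj dr
    omega
  have hstepDI : ∀ dr ∈ p.darts,
      (((dr.toProd.1 : Fin n) : ℕ) < d ∨ n - d + k ≤ ((dr.toProd.1 : Fin n) : ℕ)) →
      (((dr.toProd.2 : Fin n) : ℕ) < d ∨ n - d + k ≤ ((dr.toProd.2 : Fin n) : ℕ)) := by
    intro dr hdr h
    have h1 := hB1 dr hdr
    have h2 := himp2 dr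
    omega
  -- conclusion
  have hv0 : v0 ∈ p.support := hp.mem_support v0
  have hw0 : w0 ∈ p.support := hp.mem_support w0
  have hv0v : ((v0 : Fin n) : ℕ) = d := rfl
  have hw0v : ((w0 : Fin n) : ℕ) = n - d + k := rfl
  by_cases hA : d ≤ ((a : Fin n) : ℕ) ∧ ((a : Fin n) : ℕ) < n - d + k
  · have := auxWalkClosed
      (fun x : ↥V' => d ≤ ((x : Fin n) : ℕ) ∧ ((x : Fin n) : ℕ) < n - d + k)
      p hstepC hA w0 hw0
    omega
  · have ha' := hkx a
    have hstart : ((a : Fin n) : ℕ) < d ∨ n - d + k ≤ ((a : Fin n) : ℕ) := by omega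
    have := auxWalkClosed
      (fun x : ↥V' => ((x : Fin n) : ℕ) < d ∨ n - d + k ≤ ((x : Fin n) : ℕ))
      p hstepDI hstart v0 hv0
    omega

lemma auxDegGe (n k d : ℕ) (hd : k + 2 ≤ d) (hn : 2 * d - k + 1 ≤ n) :
    ∀ v, d ≤ deg (Hgraph n k d) v := by
  intro v
  show d ≤ ((Hgraph n k d).neighborSet v).ncard
  rcases lt_or_ge ((v : ℕ)) d with hv | hv
  · -- dominating clique vertex
    have hsub : (↑(Finset.univ.erase v) : Set (Fin n)) ⊆ (Hgraph n k d).neighborSet v := by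
      intro u hu
      rw [Finset.mem_coe, Finset.mem_erase] at hu
      exact ⟨hu.1.symm, Or.inl hv⟩
    have h := Set.ncard_le_ncard hsub (Set.toFinite _)
    rw [Set.ncard_coe_finset, Finset.card_erase_of_mem (Finset.mem_univ v),
      Finset.card_univ, Fintype.card_fin] at h
    omega
  · rcases lt_or_ge ((v : ℕ)) (n - d + k) with hv2 | hv2
    · -- clique part vertex
      have hvmem : v ∈ Finset.univ.filter fun u : Fin n => (u : ℕ) < n - d + k := by
        simp [hv2]
      have hsub : (↑((Finset.univ.filter fun u : Fin n => (u : ℕ) < n - d + k).erase v) :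
          Set (Fin n)) ⊆ (Hgraph n k d).neighborSet v := by
        intro u hu
        rw [Finset.mem_coe, Finset.mem_erase, Finset.mem_filter] at hu
        exact ⟨hu.1.symm, Or.inr (Or.inr ⟨hv2, hu.2.2⟩)⟩
      have h := Set.ncard_le_ncard hsub (Set.toFinite _)
      rw [Set.ncard_coe_finset, Finset.card_erase_of_mem hvmem,
        auxCardFinLt n (n - d + k) (by omega)] at h
      omega
    · -- independent vertex
      have hsub : (↑(Finset.univ.filter fun u : Fin n => (u : ℕ) < d) : Set (Fin n))
          ⊆ (Hgraph n k d).neighborSet v := by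
        intro u hu
        rw [Finset.mem_coe, Finset.mem_filter] at hu
        exact ⟨Fin.ne_of_val_ne (by omega), Or.inr (Or.inl hu.2)⟩
      have h := Set.ncard_le_ncard hsub (Set.toFinite _)
      rw [Set.ncard_coe_finset, auxCardFinLt n d (by omega)] at h
      omega

lemma auxDegEq (n k d : ℕ) (hd : k + 2 ≤ d) (hn : 2 * d - k + 1 ≤ n) :
    ∃ v, deg (Hgraph n k d) v = d := by
  refine ⟨⟨n - d + k, by omega⟩, ?_⟩
  show ((Hgraph n k d).neighborSet _).ncard = d
  have hset : (Hgraph n k d).neighborSet ⟨n - d + k, by omega⟩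
      = (↑(Finset.univ.filter fun u : Fin n => (u : ℕ) < d) : Set (Fin n)) := by
    ext u
    simp only [mem_neighborSet, Finset.coe_filter, Set.mem_setOf_eq, Finset.mem_univ, true_and]
    constructor
    · rintro ⟨hne, h | h | h⟩
      · exact absurd h (not_lt.2 (show d ≤ n - d + k by omega))
      · exact h
      · exact absurd h.1 (show ¬ (n - d + k < n - d + k) from lt_irrefl _)
    · intro hu
      exact ⟨Fin.ne_of_val_ne (show (n - d + k) ≠ (u : ℕ) by omega), Or.inr (Or.inl hu)⟩
  rw [hset, Set.ncard_coe_finset, auxCardFinLt n d (by omega)]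

end AuxStmt3

/-- `H_{n,k,δ}` has minimum degree exactly `δ` and is not `k`-Hamiltonian; in particular
deleting a suitable set of `k` vertices of the dominating clique `K_δ` leaves a
graph with no Hamiltonian cycle. -/
theorem stmt_3 (n k d : ℕ) (hd : k + 2 ≤ d) (hn : 2 * d - k + 1 ≤ n) :
    (∀ v, d ≤ deg (Hgraph n k d) v) ∧ (∃ v, deg (Hgraph n k d) v = d) ∧
    ¬ IsKHamiltonian (Hgraph n k d) k ∧
    ∃ S : Finset (Fin n), S.card = k ∧ (∀ v ∈ S, (v : ℕ) < d) ∧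
      ¬ ((Hgraph n k d).induce ((↑(Sᶜ) : Set (Fin n)))).IsHamiltonian := by
  have h4 : ∃ S : Finset (Fin n), S.card = k ∧ (∀ v ∈ S, (v : ℕ) < d) ∧
      ¬ ((Hgraph n k d).induce ((↑(Sᶜ) : Set (Fin n)))).IsHamiltonian := by
    refine ⟨(Finset.univ : Finset (Fin n)).filter fun v : Fin n => (v : ℕ) < k,
      auxCardFinLt n k (by omega), ?_, auxNotHam n k d hd hn⟩
    intro v hv
    have := (Finset.mem_filter.1 hv).2
    omega
  refine ⟨auxDegGe n k d hd hn, auxDegEq n k d hd hn, ?_, h4⟩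
  intro hK
  obtain ⟨S, h1, _, h3⟩ := h4
  exact h3 (hK S (le_of_eq h1))
end

section
/- If G is a graph on n ≥ 2 vertices, then the largest eigenvalue q(G) of its signless Laplacian matrix satisfies q(G) ≤ 2·e(G)/(n-1) + n - 2. -/
open SimpleGraph

section FengYuAux

open Finset

private lemma deg_eq_degree {V : Type*} [Fintype V] (G : SimpleGraph V) [DecidableRel G.Adj]
    (v : V) : deg G v = G.degree v := by
  have h : G.neighborSet v = ↑(G.neighborFinset v) := by ext w; simp
  rw [deg]; exact (congrArg Set.ncard h).trans (Set.ncard_coe_finset _)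

private lemma eCount_eq {V : Type*} [Fintype V] (G : SimpleGraph V) [DecidableRel G.Adj] :
    eCount G = G.edgeFinset.card := by
  have h : G.edgeSet = ↑G.edgeFinset := by ext e; simp
  rw [eCount, h, Set.ncard_coe_finset]

private lemma comb_aux {V : Type*} [Fintype V] [DecidableEq V] (G : SimpleGraph V)
    [DecidableRel G.Adj] (u : V) :
    2 * (∑ v ∈ G.neighborFinset u, G.degree v) + G.degree u ≤
      G.degree u ^ 2 + 2 * G.edgeFinset.card ∧
    G.degree u + ∑ v ∈ G.neighborFinset u, G.degree v ≤ 2 * G.edgeFinset.card := by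
  classical
  set Nu := G.neighborFinset u with hNu
  set A : Finset V := insert u Nu with hA
  set W : Finset V := Aᶜ with hW
  have huNu : u ∉ Nu := by simp [hNu]
  have hcardA : A.card = G.degree u + 1 := by
    rw [hA, Finset.card_insert_of_notMem huNu]; rfl
  have hsplit : ∑ v : V, G.degree v = (G.degree u + ∑ v ∈ Nu, G.degree v) + ∑ w ∈ W, G.degree w := by
    have h1 : ∑ v ∈ A, G.degree v = G.degree u + ∑ v ∈ Nu, G.degree v := by
      rw [hA, Finset.sum_insert huNu]
    have h2 : ∑ v : V, G.degree v = ∑ v ∈ A, G.degree v + ∑ w ∈ Aᶜ, G.degree w :=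
      (Finset.sum_add_sum_compl A _).symm
    rw [h2, h1, ← hW]
  have hhand : ∑ v : V, G.degree v = 2 * G.edgeFinset.card :=
    G.sum_degrees_eq_twice_card_edges
  refine ⟨?_, by omega⟩
  have hstep : ∀ v ∈ Nu, G.degree v ≤ G.degree u + (G.neighborFinset v ∩ W).card := by
    intro v hv
    have hpart : (G.neighborFinset v ∩ A).card + (G.neighborFinset v ∩ W).card
        = G.degree v := by
      have : G.neighborFinset v ∩ W = G.neighborFinset v \ A := by
        ext w; simp [hW, Finset.mem_sdiff, Finset.mem_compl]
      rw [this]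
      exact Finset.card_inter_add_card_sdiff _ _
    have hsub : G.neighborFinset v ∩ A ⊆ A.erase v := by
      intro w hw
      rw [Finset.mem_erase]
      refine ⟨?_, (Finset.mem_inter.mp hw).2⟩
      rintro rfl
      exact (G.irrefl) ((SimpleGraph.mem_neighborFinset _ _ _).mp (Finset.mem_inter.mp hw).1)
    have hvA : v ∈ A := by rw [hA]; exact Finset.mem_insert_of_mem hv
    have hle : (G.neighborFinset v ∩ A).card ≤ G.degree u := by
      calc (G.neighborFinset v ∩ A).card ≤ (A.erase v).card := Finset.card_le_card hsub
        _ = A.card - 1 := Finset.card_erase_of_mem hvA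
        _ = G.degree u := by omega
    omega
  have hS1 : ∑ v ∈ Nu, G.degree v ≤
      Nu.card * G.degree u + ∑ v ∈ Nu, (G.neighborFinset v ∩ W).card := by
    calc ∑ v ∈ Nu, G.degree v ≤ ∑ v ∈ Nu, (G.degree u + (G.neighborFinset v ∩ W).card) :=
          Finset.sum_le_sum hstep
      _ = Nu.card * G.degree u + ∑ v ∈ Nu, (G.neighborFinset v ∩ W).card := by
          rw [Finset.sum_add_distrib, Finset.sum_const, smul_eq_mul]
  have hdc : ∑ v ∈ Nu, (G.neighborFinset v ∩ W).card = ∑ w ∈ W, (G.neighborFinset w ∩ Nu).card := by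
    have e1 : ∀ (s : Finset V) (v : V), (G.neighborFinset v ∩ s).card
        = ∑ w ∈ s, if G.Adj v w then 1 else 0 := by
      intro s v
      rw [← Finset.card_filter]
      congr 1
      ext w
      simp [Finset.mem_inter, SimpleGraph.mem_neighborFinset, and_comm]
    simp only [e1]
    rw [Finset.sum_comm]
    refine Finset.sum_congr rfl fun w _ => Finset.sum_congr rfl fun v _ => ?_
    simp [G.adj_comm]
  have hdc2 : ∑ w ∈ W, (G.neighborFinset w ∩ Nu).card ≤ ∑ w ∈ W, G.degree w :=
    Finset.sum_le_sum fun w _ => Finset.card_le_card (Finset.inter_subset_left)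
  have hNucard : Nu.card = G.degree u := rfl
  nlinarith [hS1, hdc, hdc2, hsplit, hhand, sq_nonneg (G.degree u)]

private lemma real_ineq (d S e n : ℝ) (hd1 : 1 ≤ d) (hdn : d ≤ n - 1)
    (hgap : 0 ≤ (n - 1 - d) * (n - 2 - d))
    (hS : S ≤ d * (n - 1)) (h1 : d + S ≤ 2 * e) (h2 : 2 * S + d ≤ d ^ 2 + 2 * e) :
    (d * d + S) * (n - 1) ≤ (2 * e + (n - 2) * (n - 1)) * d := by
  have hd0 : (0:ℝ) < d := by linarith
  rcases le_or_gt S (d ^ 2) with hc | hc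
  · nlinarith [mul_nonneg (sub_nonneg.mpr hc) (by nlinarith : (0:ℝ) ≤ n - 1 - d),
      mul_nonneg hd0.le hgap]
  · have hlt : d < n - 1 := by nlinarith
    have hP : (0:ℝ) < d * (n - 1) - d ^ 2 := by nlinarith
    have t1 : (0:ℝ) ≤ (d * (n-1) - S) * (d * ((n - 1 - d) * (n - 2 - d))) :=
      mul_nonneg (by linarith) (mul_nonneg hd0.le hgap)
    have t2 : (0:ℝ) ≤ (S - d^2) * (d * (d - 1) * (n - 1 - d)) :=
      mul_nonneg (by linarith) (mul_nonneg (mul_nonneg hd0.le (by linarith)) (by linarith))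
    have hC' : 0 ≤ (2*S + d - d^2)*d + (n-2)*(n-1)*d - (d^2+S)*(n-1) := by
      nlinarith [t1, t2, hP]
    nlinarith [hC', hd0, h2, mul_nonneg (by linarith : (0:ℝ) ≤ d^2 + 2*e - (2*S+d)) hd0.le]

private lemma row_eq {V : Type*} [Fintype V] (G : SimpleGraph V) [DecidableRel G.Adj]
    (x : V → ℝ) (μ : ℝ) (hx : (sLap G).mulVec x = μ • x) (u : V) :
    μ * x u = (G.degree u : ℝ) * x u + ∑ v ∈ G.neighborFinset u, x v := by
  classical
  have hdeg : deg G u = G.degree u := deg_eq_degree G u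
  have h1 := congrFun hx u
  simp only [Matrix.mulVec, dotProduct, sLap, Pi.smul_apply, smul_eq_mul] at h1
  rw [← h1]
  rw [Finset.sum_congr rfl (fun v _ => add_mul _ _ (x v)), Finset.sum_add_distrib]
  congr 1
  · simp [ite_mul, hdeg]
  · rw [SimpleGraph.neighborFinset_eq_filter, Finset.sum_filter]
    exact Finset.sum_congr rfl fun v _ => by split <;> simp

end FengYuAux

/-- Feng–Yu bound: for a graph on `n ≥ 2` vertices,
`q(G) ≤ 2 e(G)/(n-1) + n - 2`. -/
theorem stmt_6 {V : Type*} [Fintype V] (G : SimpleGraph V) (hn : 2 ≤ Fintype.card V) :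
    maxEig (sLap G) ≤
      2 * (eCount G : ℝ) / ((Fintype.card V : ℝ) - 1) + (Fintype.card V : ℝ) - 2 := by
  classical
  have hV : Nonempty V := Fintype.card_pos_iff.mp (by omega)
  set n := Fintype.card V with hn_def
  have hn2 : (2:ℝ) ≤ (n:ℝ) := by exact_mod_cast hn
  have hn1pos : (0:ℝ) < (n:ℝ) - 1 := by linarith
  have hB0 : 0 ≤ 2 * (eCount G : ℝ) / ((n:ℝ) - 1) + (n:ℝ) - 2 := by
    have h1 : 0 ≤ 2 * (eCount G : ℝ) / ((n:ℝ) - 1) :=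
      div_nonneg (by positivity) hn1pos.le
    linarith
  refine Real.sSup_le ?_ hB0
  rintro μ ⟨x, hx0, hx⟩
  set e : ℝ := (eCount G : ℝ) with he_def
  set w : V → ℝ := fun v => max (G.degree v : ℝ) 1 with hw_def
  have hw : ∀ v, 0 < w v := fun v => lt_of_lt_of_le one_pos (le_max_right _ _)
  obtain ⟨u, -, hu⟩ := Finset.exists_max_image Finset.univ (fun v => |x v| / w v)
    Finset.univ_nonempty
  have hxu : 0 < |x u| := by
    obtain ⟨v0, hv0⟩ : ∃ v, x v ≠ 0 := by
      by_contra h; push_neg at h; exact hx0 (funext h)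
    have h1 : 0 < |x v0| / w v0 := div_pos (abs_pos.mpr hv0) (hw v0)
    have h2 := hu v0 (Finset.mem_univ v0)
    by_contra h
    push_neg at h
    have : |x u| = 0 := le_antisymm h (abs_nonneg _)
    rw [this, zero_div] at h2
    linarith
  have hrow := row_eq G x μ hx u
  rcases Nat.eq_zero_or_pos (G.degree u) with hdu | hdu
  · have hNe : G.neighborFinset u = ∅ := Finset.card_eq_zero.mp hdu
    rw [hNe, Finset.sum_empty, hdu] at hrow
    have : μ * x u = 0 := by simpa using hrow
    have hμ0 : μ = 0 := by
      rcases mul_eq_zero.mp this with h | h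
      · exact h
      · exact absurd h (abs_pos.mp hxu)
    rw [hμ0]
    exact hB0
  · set d : ℝ := (G.degree u : ℝ) with hd_def
    set S : ℝ := ((∑ v ∈ G.neighborFinset u, G.degree v : ℕ) : ℝ) with hS_def
    have hd1 : (1:ℝ) ≤ d := by rw [hd_def]; exact_mod_cast hdu
    have hd0 : (0:ℝ) < d := by linarith
    have hwu : w u = d := max_eq_left hd1
    -- neighbor bound
    have hnb : ∀ v ∈ G.neighborFinset u, |x v| ≤ (G.degree v : ℝ) * (|x u| / d) := by
      intro v hv
      have hadj : G.Adj u v := (SimpleGraph.mem_neighborFinset _ _ _).mp hv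
      have hdvpos : 0 < G.degree v := by
        rw [SimpleGraph.degree_pos_iff_exists_adj]
        exact ⟨u, hadj.symm⟩
      have hdv1 : (1:ℝ) ≤ (G.degree v : ℝ) := by exact_mod_cast hdvpos
      have hwv : w v = (G.degree v : ℝ) := max_eq_left hdv1
      have h1 := hu v (Finset.mem_univ v)
      rw [hwv, hwu] at h1
      have h2 := (div_le_div_iff₀ (by linarith) hd0).mp h1
      have h3 : |x v| ≤ (G.degree v : ℝ) * |x u| / d :=
        (le_div_iff₀ hd0).mpr (by linear_combination h2)
      calc |x v| ≤ (G.degree v : ℝ) * |x u| / d := h3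
        _ = (G.degree v : ℝ) * (|x u| / d) := by ring
    have habs : |μ - d| * |x u| ≤ S * (|x u| / d) := by
      have heq : (μ - d) * x u = ∑ v ∈ G.neighborFinset u, x v := by
        rw [sub_mul]; linarith [hrow]
      calc |μ - d| * |x u| = |(μ - d) * x u| := (abs_mul _ _).symm
        _ = |∑ v ∈ G.neighborFinset u, x v| := by rw [heq]
        _ ≤ ∑ v ∈ G.neighborFinset u, |x v| := Finset.abs_sum_le_sum_abs _ _
        _ ≤ ∑ v ∈ G.neighborFinset u, (G.degree v : ℝ) * (|x u| / d) :=
            Finset.sum_le_sum hnb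
        _ = S * (|x u| / d) := by rw [← Finset.sum_mul, hS_def]; push_cast; ring
    have hμd : μ ≤ d + S / d := by
      have h2 : |μ - d| ≤ S / d := by
        have h3 : S * (|x u| / d) = (S / d) * |x u| := by ring
        rw [h3] at habs
        exact le_of_mul_le_mul_right habs hxu
      linarith [(abs_le.mp h2).2]
    -- combinatorial bounds
    have hdn : d ≤ (n:ℝ) - 1 := by
      have := G.degree_lt_card_verts u
      have h1 : G.degree u + 1 ≤ n := this
      have : (d:ℝ) + 1 ≤ (n:ℝ) := by rw [hd_def]; exact_mod_cast h1
      linarith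
    have hgap : 0 ≤ ((n:ℝ) - 1 - d) * ((n:ℝ) - 2 - d) := by
      have := G.degree_lt_card_verts u
      rcases (by omega : G.degree u + 2 ≤ n ∨ G.degree u + 1 = n) with h | h
      · have h1 : d + 2 ≤ (n:ℝ) := by rw [hd_def]; exact_mod_cast h
        nlinarith
      · have h1 : d + 1 = (n:ℝ) := by rw [hd_def]; exact_mod_cast h
        nlinarith
    have hSb : S ≤ d * ((n:ℝ) - 1) := by
      have hnat : ∑ v ∈ G.neighborFinset u, G.degree v ≤ G.degree u * (n - 1) := by
        calc ∑ v ∈ G.neighborFinset u, G.degree v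
            ≤ (G.neighborFinset u).card • (n - 1) :=
              Finset.sum_le_card_nsmul _ _ _ (fun v _ => by
                have := G.degree_lt_card_verts v; omega)
          _ = G.degree u * (n - 1) := by rw [smul_eq_mul]; rfl
      have h1 : S ≤ ((G.degree u * (n - 1) : ℕ) : ℝ) := by
        rw [hS_def]; exact_mod_cast hnat
      calc S ≤ ((G.degree u * (n - 1) : ℕ) : ℝ) := h1
        _ = d * ((n:ℝ) - 1) := by
            rw [hd_def]; push_cast [Nat.cast_sub (by omega : 1 ≤ n)]; ring
    obtain ⟨hcomb1, hcomb2⟩ := comb_aux G u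
    have hee : e = (G.edgeFinset.card : ℝ) := by rw [he_def, eCount_eq]
    have h1' : d + S ≤ 2 * e := by
      rw [hee, hd_def, hS_def]; exact_mod_cast hcomb2
    have h2' : 2 * S + d ≤ d ^ 2 + 2 * e := by
      rw [hee, hd_def, hS_def]; exact_mod_cast hcomb1
    have key := real_ineq d S e (n:ℝ) hd1 hdn hgap hSb h1' h2'
    have hfin : d + S / d ≤ 2 * e / ((n:ℝ) - 1) + (n:ℝ) - 2 := by
      have e1 : d + S / d = (d * d + S) / d := by field_simp
      have e2 : 2 * e / ((n:ℝ) - 1) + (n:ℝ) - 2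
          = (2 * e + ((n:ℝ) - 2) * ((n:ℝ) - 1)) / ((n:ℝ) - 1) := by
        field_simp; ring
      rw [e1, e2]
      exact (div_le_div_iff₀ hd0 hn1pos).mpr key
    linarith
end

section
/- Let G be a connected graph with largest signless Laplacian eigenvalue q(G) and positive Perron eigenvector x (Q(G)x = q(G)x, x entrywise positive). Let u, v be vertices with x_u ≥ x_v, and let w_1,...,w_s be distinct vertices in N(v) \ (N(u) ∪ {u}) with 1 ≤ s ≤ deg(v). If G* is obtained from G by deleting the edges v w_i and adding the edges u w_i for all 1 ≤ i ≤ s, then q(G) < q(G*). -/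
open SimpleGraph

namespace RayAux

open Matrix

variable {V : Type*} [Fintype V] [DecidableEq V] {A U : Matrix V V ℝ} {ev : V → ℝ}

lemma spec_eq_range (hspec : A = U * Matrix.diagonal ev * star U)
    (hU1 : U * star U = 1) (hU2 : star U * U = 1) :
    {μ : ℝ | ∃ x : V → ℝ, x ≠ 0 ∧ A.mulVec x = μ • x} = Set.range ev := by
  ext μ
  constructor
  · rintro ⟨x, hx, hAx⟩
    set c : V → ℝ := star U *ᵥ x with hc
    have hxc : U *ᵥ c = x := by
      rw [hc, Matrix.mulVec_mulVec, hU1, Matrix.one_mulVec]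
    have hcne : c ≠ 0 := fun h => hx (by rw [← hxc, h, Matrix.mulVec_zero])
    have hDc : Matrix.diagonal ev *ᵥ c = μ • c := by
      have h1 : star U *ᵥ (A *ᵥ x) = Matrix.diagonal ev *ᵥ c := by
        rw [Matrix.mulVec_mulVec, hspec,
          show star U * (U * Matrix.diagonal ev * star U) = Matrix.diagonal ev * star U by
            rw [← Matrix.mul_assoc, ← Matrix.mul_assoc, hU2, Matrix.one_mul],
          ← Matrix.mulVec_mulVec]
      rw [hAx, Matrix.mulVec_smul] at h1
      rw [← h1]
    obtain ⟨i, hi⟩ := Function.ne_iff.mp hcne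
    refine ⟨i, ?_⟩
    have h2 := congrFun hDc i
    rw [Matrix.mulVec_diagonal] at h2
    exact mul_right_cancel₀ hi h2
  · rintro ⟨j, rfl⟩
    refine ⟨U *ᵥ Pi.single j 1, ?_, ?_⟩
    · intro h
      have h1 : star U *ᵥ (U *ᵥ Pi.single j 1) = (Pi.single j 1 : V → ℝ) := by
        rw [Matrix.mulVec_mulVec, hU2, Matrix.one_mulVec]
      rw [h, Matrix.mulVec_zero] at h1
      have := congrFun h1 j
      simp at this
    · have hd : Matrix.diagonal ev *ᵥ (Pi.single j 1 : V → ℝ) = ev j • (Pi.single j 1 : V → ℝ) := by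
        ext i
        rw [Matrix.mulVec_diagonal]
        by_cases h : i = j
        · subst h; simp
        · simp [Pi.single_eq_of_ne h]
      rw [Matrix.mulVec_mulVec, hspec, Matrix.mul_assoc (U * Matrix.diagonal ev) (star U) U,
        hU2, Matrix.mul_one, ← Matrix.mulVec_mulVec, hd, Matrix.mulVec_smul]

lemma exists_max_eigen [Nonempty V] (hspec : A = U * Matrix.diagonal ev * star U)
    (hU1 : U * star U = 1) (hU2 : star U * U = 1) :
    ∃ i, maxEig A = ev i ∧ ∀ j, ev j ≤ ev i := by
  have h := spec_eq_range hspec hU1 hU2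
  have hne : (Set.range ev).Nonempty := Set.range_nonempty _
  have hfin : (Set.range ev).Finite := Set.finite_range _
  obtain ⟨i, hi⟩ := hne.csSup_mem hfin
  refine ⟨i, by rw [maxEig, h, ← hi], fun j => ?_⟩
  rw [hi]
  exact le_csSup hfin.bddAbove (Set.mem_range_self j)

lemma rayleigh [Nonempty V] (hspec : A = U * Matrix.diagonal ev * star U)
    (hU1 : U * star U = 1) (hU2 : star U * U = 1) (y : V → ℝ) :
    y ⬝ᵥ A.mulVec y ≤ maxEig A * (y ⬝ᵥ y) ∧
      (y ⬝ᵥ A.mulVec y = maxEig A * (y ⬝ᵥ y) → A.mulVec y = maxEig A • y) := by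
  obtain ⟨i0, hi0, hmax⟩ := exists_max_eigen hspec hU1 hU2
  have hT : Uᵀ = star U := (Matrix.conjTranspose_eq_transpose_of_trivial U).symm
  set c : V → ℝ := star U *ᵥ y with hc
  have hyc : U *ᵥ c = y := by
    rw [hc, Matrix.mulVec_mulVec, hU1, Matrix.one_mulVec]
  have hdotU : ∀ z : V → ℝ, y ⬝ᵥ (U *ᵥ z) = c ⬝ᵥ z := by
    intro z
    rw [Matrix.dotProduct_mulVec, ← Matrix.mulVec_transpose, hT, hc]
  have hAy : A *ᵥ y = U *ᵥ (Matrix.diagonal ev *ᵥ c) := by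
    rw [hspec, ← Matrix.mulVec_mulVec, ← Matrix.mulVec_mulVec, hc]
  have hquad : y ⬝ᵥ A.mulVec y = ∑ i, ev i * (c i * c i) := by
    rw [show A.mulVec y = A *ᵥ y from rfl, hAy, hdotU]
    simp only [dotProduct, Matrix.mulVec_diagonal]
    exact Finset.sum_congr rfl fun i _ => by ring
  have hnorm : y ⬝ᵥ y = ∑ i, c i * c i := by
    have h := hdotU c
    rw [hyc] at h
    rw [h]
    rfl
  constructor
  · rw [hquad, hnorm, hi0, Finset.mul_sum]
    exact Finset.sum_le_sum fun i _ =>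
      mul_le_mul_of_nonneg_right (hmax i) (mul_self_nonneg _)
  · intro heq
    rw [hquad, hnorm, hi0, Finset.mul_sum] at heq
    have hzero : ∀ i ∈ Finset.univ, (ev i0 - ev i) * (c i * c i) = 0 := by
      rw [← Finset.sum_eq_zero_iff_of_nonneg (fun i _ =>
        mul_nonneg (sub_nonneg.2 (hmax i)) (mul_self_nonneg _))]
      simp only [sub_mul, Finset.sum_sub_distrib, heq, sub_self]
    have hDc : Matrix.diagonal ev *ᵥ c = ev i0 • c := by
      ext i
      rw [Matrix.mulVec_diagonal]
      have := hzero i (Finset.mem_univ i)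
      rcases mul_eq_zero.mp this with h | h
      · have : ev i = ev i0 := by linarith [sub_eq_zero.mp h]
        simp [this, Pi.smul_apply, smul_eq_mul]
      · have hci : c i = 0 := by
          rcases mul_eq_zero.mp h with h' | h' <;> exact h'
        simp [hci, Pi.smul_apply]
    rw [show A.mulVec y = A *ᵥ y from rfl, hAy, hDc, Matrix.mulVec_smul, hyc, hi0]

end RayAux

namespace GraphAux

open scoped Classical
open Matrix

variable {V : Type*} [Fintype V]

lemma sLap_isHermitian (H : SimpleGraph V) : (sLap H).IsHermitian := by
  unfold Matrix.IsHermitian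
  ext a b
  by_cases h : a = b
  · subst h; rfl
  · simp [Matrix.conjTranspose_apply, sLap, h, Ne.symm h, SimpleGraph.adj_comm]

lemma deg_eq_sum (H : SimpleGraph V) (a : V) :
    ((deg H a : ℝ)) = ∑ b, (if H.Adj a b then (1:ℝ) else 0) := by
  rw [deg, Set.ncard_eq_toFinset_card', Finset.sum_boole]
  norm_num

lemma sLap_mulVec (H : SimpleGraph V) (x : V → ℝ) (a : V) :
    (sLap H).mulVec x a = (deg H a : ℝ) * x a + ∑ b, (if H.Adj a b then x b else 0) := by
  simp only [Matrix.mulVec, dotProduct, sLap]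
  have h : (∑ b, ((if a = b then (deg H a : ℝ) else 0) + (if H.Adj a b then 1 else 0)) * x b)
      = ∑ b, ((if a = b then (deg H a : ℝ) * x b else 0) + (if H.Adj a b then x b else 0)) := by
    refine Finset.sum_congr rfl fun b _ => ?_
    split_ifs <;> ring
  rw [h, Finset.sum_add_distrib, Finset.sum_ite_eq]
  simp

lemma quad_form (H : SimpleGraph V) (x : V → ℝ) :
    x ⬝ᵥ (sLap H).mulVec x
      = ∑ a, ∑ b, (if H.Adj a b then (1:ℝ) else 0) * (x a * x a + x a * x b) := by
  rw [dotProduct]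
  refine Finset.sum_congr rfl fun a _ => ?_
  rw [sLap_mulVec H x a, deg_eq_sum H a, mul_add, Finset.sum_mul, Finset.mul_sum, Finset.mul_sum,
    ← Finset.sum_add_distrib]
  refine Finset.sum_congr rfl fun b _ => ?_
  split_ifs <;> ring


lemma rayleigh_sLap [DecidableEq V] [Nonempty V] (H : SimpleGraph V) (y : V → ℝ) :
    y ⬝ᵥ (sLap H).mulVec y ≤ maxEig (sLap H) * (y ⬝ᵥ y) ∧
      (y ⬝ᵥ (sLap H).mulVec y = maxEig (sLap H) * (y ⬝ᵥ y) →
        (sLap H).mulVec y = maxEig (sLap H) • y) := by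
  have hA := sLap_isHermitian H
  have hspec : sLap H = (hA.eigenvectorUnitary : Matrix V V ℝ) * Matrix.diagonal hA.eigenvalues *
      star (hA.eigenvectorUnitary : Matrix V V ℝ) := by
    simpa [Function.comp] using hA.spectral_theorem
  exact RayAux.rayleigh hspec ((Matrix.mem_unitaryGroup_iff).mp hA.eigenvectorUnitary.2)
    ((Matrix.mem_unitaryGroup_iff').mp hA.eigenvectorUnitary.2) y

end GraphAux

open Matrix
open scoped Classical

/-- Hong–Zhang rotation lemma for the signless Laplacian: moving the edges `v wᵢ`
to `u wᵢ` (for `wᵢ ∈ N(v) \ (N(u) ∪ {u})`) strictly increases the signless Laplacian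
spectral radius whenever `x_u ≥ x_v` for the Perron eigenvector `x`. -/
theorem stmt_9 {V : Type*} [Fintype V] (G : SimpleGraph V) (hG : G.Connected)
    (x : V → ℝ) (hx : ∀ v, 0 < x v)
    (heig : (sLap G).mulVec x = maxEig (sLap G) • x)
    (u v : V) (hxuv : x v ≤ x u)
    (W : Finset V) (hW : W.Nonempty) (hWs : W.card ≤ deg G v)
    (hWv : ↑W ⊆ G.neighborSet v \ (G.neighborSet u ∪ {u})) :
    maxEig (sLap G) <
      maxEig (sLap ((G.deleteEdges {e | ∃ w ∈ W, e = s(v, w)}) ⊔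
        SimpleGraph.fromEdgeSet {e | ∃ w ∈ W, e = s(u, w)})) := by
  haveI hne : Nonempty V := hG.nonempty
  set G' : SimpleGraph V := (G.deleteEdges {e | ∃ w ∈ W, e = s(v, w)}) ⊔
      SimpleGraph.fromEdgeSet {e | ∃ w ∈ W, e = s(u, w)} with hG'def
  have hWfacts : ∀ w ∈ W, G.Adj v w ∧ ¬ G.Adj u w ∧ w ≠ u := by
    intro w hw
    have h := hWv (Finset.mem_coe.mpr hw)
    rw [Set.mem_diff, Set.mem_union, SimpleGraph.mem_neighborSet, SimpleGraph.mem_neighborSet,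
      Set.mem_singleton_iff] at h
    push_neg at h
    exact ⟨h.1, h.2.1, h.2.2⟩
  obtain ⟨w0, hw0⟩ := hW
  have huv : u ≠ v := by
    intro h
    exact (hWfacts w0 hw0).2.1 (by rw [h]; exact (hWfacts w0 hw0).1)
  have hvW : v ∉ W := fun h => G.loopless.irrefl v ((hWfacts v h).1)
  have huW : u ∉ W := fun h => (hWfacts u h).2.2 rfl
  have hmemD : ∀ a b : V, (s(a,b) ∈ {e : Sym2 V | ∃ w ∈ W, e = s(v, w)}) ↔
      ((a = v ∧ b ∈ W) ∨ (b = v ∧ a ∈ W)) := by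
    intro a b
    simp only [Set.mem_setOf_eq]
    constructor
    · rintro ⟨w, hw, heq⟩
      rw [Sym2.eq_iff] at heq
      rcases heq with ⟨rfl, rfl⟩ | ⟨rfl, rfl⟩
      · exact Or.inl ⟨rfl, hw⟩
      · exact Or.inr ⟨rfl, hw⟩
    · rintro (⟨rfl, hb⟩ | ⟨rfl, ha⟩)
      · exact ⟨b, hb, rfl⟩
      · exact ⟨a, ha, Sym2.eq_swap⟩
  have hmemA : ∀ a b : V, (s(a,b) ∈ {e : Sym2 V | ∃ w ∈ W, e = s(u, w)}) ↔
      ((a = u ∧ b ∈ W) ∨ (b = u ∧ a ∈ W)) := by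
    intro a b
    simp only [Set.mem_setOf_eq]
    constructor
    · rintro ⟨w, hw, heq⟩
      rw [Sym2.eq_iff] at heq
      rcases heq with ⟨rfl, rfl⟩ | ⟨rfl, rfl⟩
      · exact Or.inl ⟨rfl, hw⟩
      · exact Or.inr ⟨rfl, hw⟩
    · rintro (⟨rfl, hb⟩ | ⟨rfl, ha⟩)
      · exact ⟨b, hb, rfl⟩
      · exact ⟨a, ha, Sym2.eq_swap⟩
  have hadj : ∀ a b : V, G'.Adj a b ↔
      ((G.Adj a b ∧ ¬((a = v ∧ b ∈ W) ∨ (b = v ∧ a ∈ W))) ∨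
        ((a = u ∧ b ∈ W) ∨ (b = u ∧ a ∈ W))) := by
    intro a b
    rw [hG'def, SimpleGraph.sup_adj, SimpleGraph.deleteEdges_adj, SimpleGraph.fromEdgeSet_adj,
      hmemD a b, hmemA a b]
    constructor
    · rintro (h | ⟨h, _⟩)
      · exact Or.inl h
      · exact Or.inr h
    · rintro (h | h)
      · exact Or.inl h
      · refine Or.inr ⟨h, ?_⟩
        rcases h with ⟨rfl, hb⟩ | ⟨rfl, ha⟩
        · exact ((hWfacts b hb).2.2).symm
        · exact (hWfacts a ha).2.2
  clear_value G'
  clear hG'def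
  set χ : V → ℝ := fun a => if a ∈ W then 1 else 0 with hχdef
  set dd : V → V → ℝ := fun a b =>
    ((if a = u then χ b else 0) + (if b = u then χ a else 0)) -
      ((if a = v then χ b else 0) + (if b = v then χ a else 0)) with hdddef
  have hχu : χ u = 0 := by simp only [hχdef]; rw [if_neg huW]
  have hχv : χ v = 0 := by simp only [hχdef]; rw [if_neg hvW]
  have hkey : ∀ a b : V, (if G'.Adj a b then (1:ℝ) else 0)
      = (if G.Adj a b then (1:ℝ) else 0) + dd a b := by
    intro a b
    by_cases h1 : a = u ∧ b ∈ W
    · obtain ⟨hau, hbW⟩ := h1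
      have h2 : G'.Adj a b := (hadj a b).2 (Or.inr (Or.inl ⟨hau, hbW⟩))
      have h3 : ¬ G.Adj a b := by rw [hau]; exact (hWfacts b hbW).2.1
      have h4 : b ≠ u := (hWfacts b hbW).2.2
      have h5 : b ≠ v := fun h => hvW (h ▸ hbW)
      rw [hau] at h2 h3
      simp [hdddef, hχdef, hau, h2, h3, h4, h5, huv, huW, hbW]
    by_cases h2 : b = u ∧ a ∈ W
    · obtain ⟨hbu, haW⟩ := h2
      have h2' : G'.Adj a b := (hadj a b).2 (Or.inr (Or.inr ⟨hbu, haW⟩))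
      have h3 : ¬ G.Adj a b := fun h => (hWfacts a haW).2.1 (hbu ▸ h.symm)
      have h4 : a ≠ u := (hWfacts a haW).2.2
      have h5 : a ≠ v := fun h => hvW (h ▸ haW)
      rw [hbu] at h2' h3
      simp [hdddef, hχdef, hbu, h2', h3, h4, h5, huv, huW, haW]
    by_cases h3 : a = v ∧ b ∈ W
    · obtain ⟨hav, hbW⟩ := h3
      have hGadj : G.Adj a b := by rw [hav]; exact (hWfacts b hbW).1
      have hG'n : ¬ G'.Adj a b := by
        rw [hadj]
        rintro (⟨_, hn⟩ | (⟨hau, _⟩ | ⟨hbu, _⟩))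
        · exact hn (Or.inl ⟨hav, hbW⟩)
        · exact huv ((hav ▸ hau : (v:V) = u)).symm
        · exact (hWfacts b hbW).2.2 hbu
      have h4 : b ≠ u := (hWfacts b hbW).2.2
      have h5 : b ≠ v := fun h => hvW (h ▸ hbW)
      rw [hav] at hGadj hG'n
      simp [hdddef, hχdef, hav, hGadj, hG'n, h4, h5, huv.symm, hvW, hbW]
    by_cases h4 : b = v ∧ a ∈ W
    · obtain ⟨hbv, haW⟩ := h4
      have hGadj : G.Adj a b := by rw [hbv]; exact ((hWfacts a haW).1).symm
      have hG'n : ¬ G'.Adj a b := by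
        rw [hadj]
        rintro (⟨_, hn⟩ | (⟨hau, _⟩ | ⟨hbu, _⟩))
        · exact hn (Or.inr ⟨hbv, haW⟩)
        · exact (hWfacts a haW).2.2 hau
        · exact huv ((hbv ▸ hbu : (v:V) = u)).symm
      have h5 : a ≠ u := (hWfacts a haW).2.2
      have h6 : a ≠ v := fun h => hvW (h ▸ haW)
      rw [hbv] at hGadj hG'n
      simp [hdddef, hχdef, hbv, hGadj, hG'n, h5, h6, huv.symm, hvW, haW]
    · have hG'e : G'.Adj a b ↔ G.Adj a b := by
        rw [hadj]
        constructor
        · rintro (⟨h, _⟩ | (h | h))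
          · exact h
          · exact absurd h h1
          · exact absurd h h2
        · intro h
          exact Or.inl ⟨h, fun hc => hc.elim (fun hc => h3 hc) (fun hc => h4 hc)⟩
      have e1 : (if a = u then χ b else 0) = 0 := by
        split_ifs with h
        · simp only [hχdef]; exact if_neg (fun hb => h1 ⟨h, hb⟩)
        · rfl
      have e2 : (if b = u then χ a else 0) = 0 := by
        split_ifs with h
        · simp only [hχdef]; exact if_neg (fun ha => h2 ⟨h, ha⟩)
        · rfl
      have e3 : (if a = v then χ b else 0) = 0 := by
        split_ifs with h
        · simp only [hχdef]; exact if_neg (fun hb => h3 ⟨h, hb⟩)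
        · rfl
      have e4 : (if b = v then χ a else 0) = 0 := by
        split_ifs with h
        · simp only [hχdef]; exact if_neg (fun ha => h4 ⟨h, ha⟩)
        · rfl
      simp only [hdddef]
      rw [e1, e2, e3, e4]
      simp [hG'e]
  have hS1 : ∀ (z : V), (∑ a, ∑ b, (if a = z then χ b * (x a * x a + x a * x b) else 0))
      = ∑ w ∈ W, (x z * x z + x z * x w) := by
    intro z
    rw [Finset.sum_comm]
    have h : ∀ b : V, (∑ a, if a = z then χ b * (x a * x a + x a * x b) else 0)
        = χ b * (x z * x z + x z * x b) := by
      intro b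
      rw [Finset.sum_ite_eq']
      simp
    simp only [h]
    simp only [hχdef, ite_mul, one_mul, zero_mul]
    rw [Finset.sum_ite_mem, Finset.univ_inter]
  have hS2 : ∀ (z : V), (∑ a, ∑ b, (if b = z then χ a * (x a * x a + x a * x b) else 0))
      = ∑ w ∈ W, (x w * x w + x w * x z) := by
    intro z
    have h : ∀ a : V, (∑ b, if b = z then χ a * (x a * x a + x a * x b) else 0)
        = χ a * (x a * x a + x a * x z) := by
      intro a
      rw [Finset.sum_ite_eq']
      simp
    simp only [h]
    simp only [hχdef, ite_mul, one_mul, zero_mul]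
    rw [Finset.sum_ite_mem, Finset.univ_inter]
  have hQdiff : x ⬝ᵥ (sLap G').mulVec x = x ⬝ᵥ (sLap G).mulVec x +
      ∑ w ∈ W, ((x u + x w) * (x u + x w) - (x v + x w) * (x v + x w)) := by
    rw [GraphAux.quad_form, GraphAux.quad_form]
    have hstep : (∑ a, ∑ b, (if G'.Adj a b then (1:ℝ) else 0) * (x a * x a + x a * x b))
        = (∑ a, ∑ b, ((if G.Adj a b then (1:ℝ) else 0) * (x a * x a + x a * x b) +
            (((if a = u then χ b * (x a * x a + x a * x b) else 0) +
              (if b = u then χ a * (x a * x a + x a * x b) else 0)) -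
             ((if a = v then χ b * (x a * x a + x a * x b) else 0) +
              (if b = v then χ a * (x a * x a + x a * x b) else 0))))) := by
      refine Finset.sum_congr rfl fun a _ => Finset.sum_congr rfl fun b _ => ?_
      rw [hkey a b]
      simp only [hdddef]
      split_ifs <;> ring
    rw [hstep]
    simp only [Finset.sum_add_distrib, Finset.sum_sub_distrib]
    rw [hS1 u, hS2 u, hS1 v, hS2 v]
    rw [← Finset.sum_add_distrib, ← Finset.sum_add_distrib, ← Finset.sum_sub_distrib]
    congr 1
    rw [← Finset.sum_sub_distrib]
    refine Finset.sum_congr rfl fun w _ => ?_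
    ring
  have hdd_u : ∀ b, dd u b = χ b := by
    intro b
    simp [hdddef, hχu, huv, ite_self]
  have hsum_χ : ∑ b, χ b = (W.card : ℝ) := by
    simp only [hχdef]
    rw [Finset.sum_ite_mem, Finset.univ_inter]
    simp
  have hsum_χx : ∑ b, χ b * x b = ∑ w ∈ W, x w := by
    simp only [hχdef, ite_mul, one_mul, zero_mul]
    rw [Finset.sum_ite_mem, Finset.univ_inter]
  have hentry : (sLap G').mulVec x u = (sLap G).mulVec x u +
      ((W.card : ℝ) * x u + ∑ w ∈ W, x w) := by
    rw [GraphAux.sLap_mulVec, GraphAux.sLap_mulVec, GraphAux.deg_eq_sum, GraphAux.deg_eq_sum]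
    have h1 : ∀ b, (if G'.Adj u b then (1:ℝ) else 0) = (if G.Adj u b then (1:ℝ) else 0) + χ b :=
      fun b => by rw [hkey u b, hdd_u b]
    have h2 : ∀ b, (if G'.Adj u b then x b else 0) = (if G.Adj u b then x b else 0) + χ b * x b := by
      intro b
      have h := congrArg (· * x b) (h1 b)
      simpa [ite_mul, zero_mul, one_mul, add_mul] using h
    simp only [h1, h2]
    rw [Finset.sum_add_distrib, Finset.sum_add_distrib, hsum_χ, hsum_χx]
    ring
  have hray := GraphAux.rayleigh_sLap G' x
  have hxx : (0:ℝ) < x ⬝ᵥ x :=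
    Finset.sum_pos (fun i _ => mul_pos (hx i) (hx i)) Finset.univ_nonempty
  have hAx : x ⬝ᵥ (sLap G).mulVec x = maxEig (sLap G) * (x ⬝ᵥ x) := by
    rw [heig, dotProduct_smul, smul_eq_mul]
  have hΔnn : 0 ≤ ∑ w ∈ W, ((x u + x w) * (x u + x w) - (x v + x w) * (x v + x w)) :=
    Finset.sum_nonneg fun w _ => by nlinarith [hx w, hx u, hx v]
  have hqle : maxEig (sLap G) * (x ⬝ᵥ x) ≤ x ⬝ᵥ (sLap G').mulVec x := by
    rw [hQdiff, hAx]
    linarith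
  rcases lt_or_eq_of_le hray.1 with hlt | heq2
  · exact (mul_lt_mul_iff_of_pos_right hxx).mp (lt_of_le_of_lt hqle hlt)
  · have hBx := hray.2 heq2
    have h1 := congrFun hBx u
    rw [hentry] at h1
    have h2 : (sLap G).mulVec x u = maxEig (sLap G) * x u := by rw [heig]; rfl
    rw [h2] at h1
    have h3 : (maxEig (sLap G') • x) u = maxEig (sLap G') * x u := rfl
    rw [h3] at h1
    have hpos : 0 < (W.card : ℝ) * x u + ∑ w ∈ W, x w := by
      have hs : 0 < ∑ w ∈ W, x w := Finset.sum_pos (fun w _ => hx w) ⟨w0, hw0⟩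
      have hc : (0:ℝ) ≤ (W.card : ℝ) * x u := mul_nonneg (Nat.cast_nonneg _) (le_of_lt (hx u))
      linarith
    have h4 : maxEig (sLap G) * x u < maxEig (sLap G') * x u := by linarith
    exact (mul_lt_mul_iff_of_pos_right (hx u)).mp h4
end

section
/- Let G be a graph with signless Laplacian eigenvalue q and eigenvector f, and let z_1, z_2 be adjacent vertices with N(z_2) \ {z_1} ⊆ N(z_1) \ {z_2} and deg(z_1) > deg(z_2). If f is entrywise positive and q > deg(z_1) - 1, then f_{z_1} > f_{z_2}. -/
open SimpleGraph

open scoped Classical in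
lemma sLap_mulVec {V : Type*} [Fintype V] (G : SimpleGraph V) (f : V → ℝ) (z : V) :
    (sLap G).mulVec f z = (deg G z : ℝ) * f z + ∑ v ∈ (G.neighborSet z).toFinset, f v := by
  classical
  unfold Matrix.mulVec sLap
  simp only [dotProduct, add_mul, Finset.sum_add_distrib, ite_mul, one_mul, zero_mul]
  congr 1
  · simp
  · rw [← Finset.sum_filter]
    congr 1
    ext v
    simp

/-- Monotonicity of Perron entries: if `z₁ ~ z₂`, `N(z₂)\{z₁} ⊆ N(z₁)\{z₂}`,
`d(z₁) > d(z₂)`, `f` is a positive eigenvector of `Q(G)` for `q > d(z₁) - 1`,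
then `f_{z₁} > f_{z₂}`. -/
theorem stmt_17 {V : Type*} [Fintype V] (G : SimpleGraph V) (f : V → ℝ) (q : ℝ)
    (hf : ∀ v, 0 < f v) (heig : (sLap G).mulVec f = q • f)
    (z1 z2 : V) (hadj : G.Adj z1 z2)
    (hN : G.neighborSet z2 \ {z1} ⊆ G.neighborSet z1 \ {z2})
    (hdeg : deg G z2 < deg G z1)
    (hq : (deg G z1 : ℝ) - 1 < q) :
f z2 < f z1 := by
  classical
  have h1 := congrFun heig z1
  have h2 := congrFun heig z2
  rw [sLap_mulVec] at h1 h2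
  simp only [Pi.smul_apply, smul_eq_mul] at h1 h2
  have hz2 : z2 ∈ (G.neighborSet z1).toFinset := by simp [hadj]
  have hz1 : z1 ∈ (G.neighborSet z2).toFinset := by simp [hadj.symm]
  have e1 : ∑ v ∈ (G.neighborSet z1).toFinset, f v
      = (∑ v ∈ (G.neighborSet z1).toFinset.erase z2, f v) + f z2 :=
    (Finset.sum_erase_add _ _ hz2).symm
  have e2 : ∑ v ∈ (G.neighborSet z2).toFinset, f v
      = (∑ v ∈ (G.neighborSet z2).toFinset.erase z1, f v) + f z1 :=
    (Finset.sum_erase_add _ _ hz1).symm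
  have hsub : (G.neighborSet z2).toFinset.erase z1 ⊆ (G.neighborSet z1).toFinset.erase z2 := by
    intro v hv
    rw [Finset.mem_erase, Set.mem_toFinset] at hv ⊢
    have := hN (show v ∈ G.neighborSet z2 \ {z1} from ⟨hv.2, by simpa using hv.1⟩)
    exact ⟨by simpa using this.2, this.1⟩
  have hle : ∑ v ∈ (G.neighborSet z2).toFinset.erase z1, f v
      ≤ ∑ v ∈ (G.neighborSet z1).toFinset.erase z2, f v :=
    Finset.sum_le_sum_of_subset_of_nonneg hsub (fun i _ _ => (hf i).le)
  have hd : (deg G z2 : ℝ) + 1 ≤ (deg G z1 : ℝ) := by exact_mod_cast hdeg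
  rw [e1] at h1
  rw [e2] at h2
  by_contra h
  push_neg at h
  have hcoef : (0:ℝ) ≤ q + 1 - (deg G z1 : ℝ) := by linarith
  have hkey : 0 ≤ (q + 1 - (deg G z1 : ℝ)) * (f z2 - f z1) :=
    mul_nonneg hcoef (by linarith)
  nlinarith [hf z2, hf z1, mul_nonneg hcoef (hf z2).le,
    mul_le_mul_of_nonneg_left (show f z1 ≤ f z2 from h) (Nat.cast_nonneg (deg G z1))]
end
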